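/- arXiv:1012.4667 — 2 statements merged into one kernel-verified Lean document; each statement's English description precedes it below -/
import Mathlib

section
/- Let D be a bounded open set in the complex plane, z, z0 ∈ ℂ, and 0 < δ < 1/2. Then there is a constant η(D) > 0, depending only on D, such that ∫_{D \ B(z0,δ)} 1/(|ζ − z| · |ζ − z0|²) dA(ζ) ≤ η(D)/δ, where dA is Lebesgue area measure and B(z0,δ) is the open disc of radius δ centered at z0. -/
open MeasureTheory Metric Set Real
open scoped ENNReal NNReal

lemma my_geom_tsum_lt_top {c : ℝ} (hc : 0 ≤ c) :
    (∑' n : ℕ, ENNReal.ofReal (c * (2⁻¹ : ℝ) ^ n)) < ⊤ := by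
  rw [← ENNReal.ofReal_tsum_of_nonneg (fun n => by positivity)
    ((summable_geometric_of_lt_one (by norm_num) (by norm_num)).mul_left c)]
  exact ENNReal.ofReal_lt_top

lemma my_integrableOn_inv_norm_unit_ball :
    IntegrableOn (fun x : ℂ => ‖x‖⁻¹) (ball 0 1) volume := by
  constructor
  · exact measurable_norm.inv.aestronglyMeasurable
  · rw [hasFiniteIntegral_iff_norm]
    set A : ℕ → Set ℂ := fun n => closedBall 0 ((2:ℝ)⁻¹ ^ n) \ ball 0 ((2:ℝ)⁻¹ ^ (n+1)) with hA
    have hcover : ball (0:ℂ) 1 ⊆ {0} ∪ ⋃ n, A n := by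
      intro x hx
      rcases eq_or_ne x 0 with rfl | hx0
      · exact Or.inl rfl
      have hx0' : 0 < ‖x‖ := norm_pos_iff.mpr hx0
      have hex : ∃ n : ℕ, (2:ℝ)⁻¹ ^ (n+1) ≤ ‖x‖ := by
        obtain ⟨n, hn⟩ := exists_pow_lt_of_lt_one hx0' (by norm_num : (2:ℝ)⁻¹ < 1)
        exact ⟨n, (pow_le_pow_of_le_one (by norm_num) (by norm_num) (Nat.le_succ n)).trans hn.le⟩
      refine Or.inr (mem_iUnion.2 ⟨Nat.find hex, ⟨?_, ?_⟩⟩)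
      · rw [mem_closedBall_zero_iff]
        rcases Nat.eq_zero_or_pos (Nat.find hex) with h0 | hpos
        · rw [h0]; simpa using (mem_ball_zero_iff.1 hx).le
        · obtain ⟨m, hm⟩ := Nat.exists_eq_succ_of_ne_zero hpos.ne'
          have hmin := Nat.find_min hex (m := m) (by omega)
          rw [hm]
          exact (not_le.1 hmin).le
      · intro h
        exact absurd (mem_ball_zero_iff.1 h) (not_lt.2 (Nat.find_spec hex))
    calc ∫⁻ x in ball (0:ℂ) 1, ENNReal.ofReal ‖(‖x‖⁻¹ : ℝ)‖
        ≤ ∫⁻ x in ({0} ∪ ⋃ n, A n : Set ℂ), ENNReal.ofReal ‖(‖x‖⁻¹ : ℝ)‖ :=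
          lintegral_mono_set hcover
      _ ≤ (∫⁻ x in ({0} : Set ℂ), ENNReal.ofReal ‖(‖x‖⁻¹ : ℝ)‖)
            + ∫⁻ x in (⋃ n, A n), ENNReal.ofReal ‖(‖x‖⁻¹ : ℝ)‖ := lintegral_union_le _ _ _
      _ ≤ 0 + ∑' n, ∫⁻ x in A n, ENNReal.ofReal ‖(‖x‖⁻¹ : ℝ)‖ := by
          refine add_le_add (le_of_eq ?_) (lintegral_iUnion_le _ _)
          exact setLIntegral_measure_zero _ _ (measure_singleton 0)
      _ ≤ 0 + ∑' n, ENNReal.ofReal (2 * π * (2⁻¹ : ℝ) ^ n) := by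
          refine add_le_add le_rfl (ENNReal.tsum_le_tsum fun n => ?_)
          have hbound : ∀ x ∈ A n,
              ENNReal.ofReal ‖(‖x‖⁻¹ : ℝ)‖ ≤ ENNReal.ofReal ((2:ℝ) ^ (n+1)) := by
            intro x hx
            have h1 : (2:ℝ)⁻¹ ^ (n+1) ≤ ‖x‖ := not_lt.1 (fun h => hx.2 (mem_ball_zero_iff.2 h))
            apply ENNReal.ofReal_le_ofReal
            rw [Real.norm_of_nonneg (by positivity)]
            calc ‖x‖⁻¹ ≤ ((2:ℝ)⁻¹ ^ (n+1))⁻¹ := by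
                  exact inv_anti₀ (by positivity) h1
              _ = 2 ^ (n+1) := by simp [inv_pow]
          calc ∫⁻ x in A n, ENNReal.ofReal ‖(‖x‖⁻¹ : ℝ)‖
              ≤ ∫⁻ _ in A n, ENNReal.ofReal ((2:ℝ) ^ (n+1)) :=
                setLIntegral_mono measurable_const hbound
            _ = ENNReal.ofReal ((2:ℝ) ^ (n+1)) * volume (A n) := setLIntegral_const _ _
            _ ≤ ENNReal.ofReal ((2:ℝ) ^ (n+1)) * volume (closedBall (0:ℂ) ((2:ℝ)⁻¹ ^ n)) :=
                mul_le_mul_right (measure_mono diff_subset) _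
            _ = ENNReal.ofReal (2 * π * (2⁻¹ : ℝ) ^ n) := by
                rw [Complex.volume_closedBall]
                have hpi : ((NNReal.pi : ℝ≥0∞)) = ENNReal.ofReal π := by
                  rw [← ENNReal.ofReal_coe_nnreal, NNReal.coe_real_pi]
                rw [hpi]
                rw [← ENNReal.ofReal_pow (by positivity), ← ENNReal.ofReal_mul (by positivity),
                  ← ENNReal.ofReal_mul (by positivity)]
                congr 1
                have ht : ((2:ℝ) ^ n) ≠ 0 := by positivity
                rw [inv_pow, pow_succ]
                field_simp
      _ < ⊤ := by rw [zero_add]; exact my_geom_tsum_lt_top (by positivity)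

lemma my_integrableOn_inv_cube_norm :
    IntegrableOn (fun x : ℂ => (‖x‖ ^ 3)⁻¹) ((ball 0 1)ᶜ) volume := by
  constructor
  · exact (measurable_norm.pow_const 3).inv.aestronglyMeasurable
  · rw [hasFiniteIntegral_iff_norm]
    set A : ℕ → Set ℂ := fun n => closedBall 0 ((2:ℝ) ^ (n+1)) \ ball 0 ((2:ℝ) ^ n) with hA
    have hcover : (ball (0:ℂ) 1)ᶜ ⊆ ⋃ n, A n := by
      intro x hx
      have hx1 : (1:ℝ) ≤ ‖x‖ := not_lt.1 (fun h => hx (mem_ball_zero_iff.2 h))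
      have hex : ∃ n : ℕ, ‖x‖ ≤ (2:ℝ) ^ (n+1) := by
        obtain ⟨n, hn⟩ := pow_unbounded_of_one_lt ‖x‖ (by norm_num : (1:ℝ) < 2)
        exact ⟨n, hn.le.trans (pow_le_pow_right₀ (by norm_num) (Nat.le_succ n))⟩
      refine mem_iUnion.2 ⟨Nat.find hex, ⟨?_, ?_⟩⟩
      · exact mem_closedBall_zero_iff.2 (Nat.find_spec hex)
      · intro h
        have hlt := mem_ball_zero_iff.1 h
        rcases Nat.eq_zero_or_pos (Nat.find hex) with h0 | hpos
        · rw [h0, pow_zero] at hlt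
          linarith
        · obtain ⟨m, hm⟩ := Nat.exists_eq_succ_of_ne_zero hpos.ne'
          have hmin := Nat.find_min hex (m := m) (by omega)
          rw [hm] at hlt
          exact hmin hlt.le
    calc ∫⁻ x in (ball (0:ℂ) 1)ᶜ, ENNReal.ofReal ‖((‖x‖ ^ 3)⁻¹ : ℝ)‖
        ≤ ∫⁻ x in (⋃ n, A n), ENNReal.ofReal ‖((‖x‖ ^ 3)⁻¹ : ℝ)‖ := lintegral_mono_set hcover
      _ ≤ ∑' n, ∫⁻ x in A n, ENNReal.ofReal ‖((‖x‖ ^ 3)⁻¹ : ℝ)‖ := lintegral_iUnion_le _ _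
      _ ≤ ∑' n, ENNReal.ofReal (4 * π * (2⁻¹ : ℝ) ^ n) := by
          refine ENNReal.tsum_le_tsum fun n => ?_
          have hbound : ∀ x ∈ A n,
              ENNReal.ofReal ‖((‖x‖ ^ 3)⁻¹ : ℝ)‖ ≤ ENNReal.ofReal ((((2:ℝ) ^ n) ^ 3)⁻¹) := by
            intro x hx
            have h1 : (2:ℝ) ^ n ≤ ‖x‖ := not_lt.1 (fun h => hx.2 (mem_ball_zero_iff.2 h))
            apply ENNReal.ofReal_le_ofReal
            rw [Real.norm_of_nonneg (by positivity)]
            exact inv_anti₀ (by positivity) (by gcongr)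
          calc ∫⁻ x in A n, ENNReal.ofReal ‖((‖x‖ ^ 3)⁻¹ : ℝ)‖
              ≤ ∫⁻ _ in A n, ENNReal.ofReal ((((2:ℝ) ^ n) ^ 3)⁻¹) :=
                setLIntegral_mono measurable_const hbound
            _ = ENNReal.ofReal ((((2:ℝ) ^ n) ^ 3)⁻¹) * volume (A n) := setLIntegral_const _ _
            _ ≤ ENNReal.ofReal ((((2:ℝ) ^ n) ^ 3)⁻¹) * volume (closedBall (0:ℂ) ((2:ℝ) ^ (n+1))) :=
                mul_le_mul_right (measure_mono diff_subset) _
            _ ≤ ENNReal.ofReal (4 * π * (2⁻¹ : ℝ) ^ n) := by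
                rw [Complex.volume_closedBall]
                have hpi : ((NNReal.pi : ℝ≥0∞)) = ENNReal.ofReal π := by
                  rw [← ENNReal.ofReal_coe_nnreal, NNReal.coe_real_pi]
                rw [hpi, ← ENNReal.ofReal_pow (by positivity),
                  ← ENNReal.ofReal_mul (by positivity), ← ENNReal.ofReal_mul (by positivity)]
                apply le_of_eq
                congr 1
                have ht : ((2:ℝ) ^ n) ≠ 0 := by positivity
                rw [inv_pow, pow_succ]
                field_simp
                ring
      _ < ⊤ := my_geom_tsum_lt_top (by positivity)

lemma my_key1 (z0 : ℂ) {δ : ℝ} (hδ : 0 < δ) :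
    IntegrableOn (fun ζ : ℂ => (‖ζ - z0‖ ^ 3)⁻¹) ((ball z0 δ)ᶜ) volume ∧
      (∫ ζ in (ball z0 δ)ᶜ, (‖ζ - z0‖ ^ 3)⁻¹) =
        (∫ x in (ball (0:ℂ) 1)ᶜ, (‖x‖ ^ 3)⁻¹) / δ := by
  have hmeas1 : MeasurableSet ((ball (0:ℂ) 1)ᶜ) := measurableSet_ball.compl
  have hmeasδ : MeasurableSet ((ball (0:ℂ) δ)ᶜ) := measurableSet_ball.compl
  have hmeasz : MeasurableSet ((ball z0 δ)ᶜ) := measurableSet_ball.compl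
  set f₁ : ℂ → ℝ := fun x => (‖x‖ ^ 3)⁻¹ with hf₁
  have hscale : ∀ x : ℂ, ((ball (0:ℂ) δ)ᶜ).indicator f₁ (δ • x)
      = (δ ^ 3)⁻¹ * ((ball (0:ℂ) 1)ᶜ).indicator f₁ x := by
    intro x
    have hmem : δ • x ∈ (ball (0:ℂ) δ)ᶜ ↔ x ∈ (ball (0:ℂ) 1)ᶜ := by
      simp only [mem_compl_iff, mem_ball_zero_iff, norm_smul, Real.norm_eq_abs,
        abs_of_pos hδ, not_iff_not]
      exact mul_lt_iff_lt_one_right hδ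
    by_cases hx : x ∈ (ball (0:ℂ) 1)ᶜ
    · rw [indicator_of_mem (hmem.mpr hx), indicator_of_mem hx, hf₁]
      simp only [norm_smul, Real.norm_eq_abs, abs_of_pos hδ]
      rw [mul_pow, mul_inv]
    · rw [indicator_of_notMem (fun h => hx (hmem.mp h)), indicator_of_notMem hx, mul_zero]
  have hint1 : Integrable (((ball (0:ℂ) 1)ᶜ).indicator f₁) volume :=
    (integrable_indicator_iff hmeas1).2 my_integrableOn_inv_cube_norm
  have hintδ : Integrable (((ball (0:ℂ) δ)ᶜ).indicator f₁) volume := by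
    rw [← integrable_comp_smul_iff volume (((ball (0:ℂ) δ)ᶜ).indicator f₁) (ne_of_gt hδ)]
    rw [show (fun x : ℂ => ((ball (0:ℂ) δ)ᶜ).indicator f₁ (δ • x))
        = fun x => (δ ^ 3)⁻¹ * ((ball (0:ℂ) 1)ᶜ).indicator f₁ x from funext hscale]
    exact hint1.const_mul _
  have htrans_fun : (fun ζ : ℂ => ((ball (0:ℂ) δ)ᶜ).indicator f₁ (ζ - z0))
      = ((ball z0 δ)ᶜ).indicator (fun ζ => f₁ (ζ - z0)) := by
    funext ζ
    have hm : ζ - z0 ∈ (ball (0:ℂ) δ)ᶜ ↔ ζ ∈ (ball z0 δ)ᶜ := by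
      simp [mem_ball, dist_eq_norm]
    by_cases hζ : ζ ∈ (ball z0 δ)ᶜ
    · rw [indicator_of_mem (hm.mpr hζ), indicator_of_mem hζ]
    · rw [indicator_of_notMem (fun h => hζ (hm.mp h)), indicator_of_notMem hζ]
  have hintz : Integrable (((ball z0 δ)ᶜ).indicator (fun ζ => f₁ (ζ - z0))) volume := by
    rw [← htrans_fun]; exact hintδ.comp_sub_right z0
  refine ⟨(integrable_indicator_iff hmeasz).1 hintz, ?_⟩
  have h1 : ∫ x : ℂ, ((ball (0:ℂ) δ)ᶜ).indicator f₁ (δ • x)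
      = (δ ^ 3)⁻¹ * ∫ x, ((ball (0:ℂ) 1)ᶜ).indicator f₁ x := by
    rw [show (fun x : ℂ => ((ball (0:ℂ) δ)ᶜ).indicator f₁ (δ • x))
        = fun x => (δ ^ 3)⁻¹ * ((ball (0:ℂ) 1)ᶜ).indicator f₁ x from funext hscale]
    exact integral_const_mul _ _
  have h2 := MeasureTheory.Measure.integral_comp_smul (volume : Measure ℂ)
    (((ball (0:ℂ) δ)ᶜ).indicator f₁) δ
  rw [h1, Complex.finrank_real_complex] at h2
  rw [abs_of_pos (by positivity : (0:ℝ) < ((δ:ℝ) ^ 2)⁻¹), smul_eq_mul] at h2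
  have hv : (∫ ζ in (ball z0 δ)ᶜ, (‖ζ - z0‖ ^ 3)⁻¹)
      = ∫ w : ℂ, ((ball (0:ℂ) δ)ᶜ).indicator f₁ w := by
    rw [← integral_indicator hmeasz, ← htrans_fun]
    exact integral_sub_right_eq_self (((ball (0:ℂ) δ)ᶜ).indicator f₁) z0
  rw [hv, ← integral_indicator hmeas1]
  set I1 := ∫ x : ℂ, ((ball (0:ℂ) 1)ᶜ).indicator f₁ x with hI1
  set Iδ := ∫ w : ℂ, ((ball (0:ℂ) δ)ᶜ).indicator f₁ w with hIδ
  have hδ' : (δ:ℝ) ≠ 0 := ne_of_gt hδ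
  field_simp at h2 ⊢
  nlinarith [h2, mul_pos hδ hδ]

lemma my_key2 (z : ℂ) {r : ℝ} (hr : 0 < r) :
    IntegrableOn (fun ζ : ℂ => ‖ζ - z‖⁻¹) (ball z r) volume ∧
      (∫ ζ in ball z r, ‖ζ - z‖⁻¹) = (∫ x in ball (0:ℂ) 1, ‖x‖⁻¹) * r := by
  have hmeas1 : MeasurableSet (ball (0:ℂ) 1) := measurableSet_ball
  have hmeasδ : MeasurableSet (ball (0:ℂ) r) := measurableSet_ball
  have hmeasz : MeasurableSet (ball z r) := measurableSet_ball
  set f₂ : ℂ → ℝ := fun x => ‖x‖⁻¹ with hf₂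
  have hscale : ∀ x : ℂ, (ball (0:ℂ) r).indicator f₂ (r • x)
      = r⁻¹ * (ball (0:ℂ) 1).indicator f₂ x := by
    intro x
    have hmem : r • x ∈ ball (0:ℂ) r ↔ x ∈ ball (0:ℂ) 1 := by
      simp only [mem_ball_zero_iff, norm_smul, Real.norm_eq_abs, abs_of_pos hr]
      exact mul_lt_iff_lt_one_right hr
    by_cases hx : x ∈ ball (0:ℂ) 1
    · rw [indicator_of_mem (hmem.mpr hx), indicator_of_mem hx, hf₂]
      simp only [norm_smul, Real.norm_eq_abs, abs_of_pos hr]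
      rw [mul_inv]
    · rw [indicator_of_notMem (fun h => hx (hmem.mp h)), indicator_of_notMem hx, mul_zero]
  have hint1 : Integrable ((ball (0:ℂ) 1).indicator f₂) volume :=
    (integrable_indicator_iff hmeas1).2 my_integrableOn_inv_norm_unit_ball
  have hintδ : Integrable ((ball (0:ℂ) r).indicator f₂) volume := by
    rw [← integrable_comp_smul_iff volume ((ball (0:ℂ) r).indicator f₂) (ne_of_gt hr)]
    rw [show (fun x : ℂ => (ball (0:ℂ) r).indicator f₂ (r • x))
        = fun x => r⁻¹ * (ball (0:ℂ) 1).indicator f₂ x from funext hscale]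
    exact hint1.const_mul _
  have htrans_fun : (fun ζ : ℂ => (ball (0:ℂ) r).indicator f₂ (ζ - z))
      = (ball z r).indicator (fun ζ => f₂ (ζ - z)) := by
    funext ζ
    have hm : ζ - z ∈ ball (0:ℂ) r ↔ ζ ∈ ball z r := by
      simp [mem_ball, dist_eq_norm]
    by_cases hζ : ζ ∈ ball z r
    · rw [indicator_of_mem (hm.mpr hζ), indicator_of_mem hζ]
    · rw [indicator_of_notMem (fun h => hζ (hm.mp h)), indicator_of_notMem hζ]
  have hintz : Integrable ((ball z r).indicator (fun ζ => f₂ (ζ - z))) volume := by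
    rw [← htrans_fun]; exact hintδ.comp_sub_right z
  refine ⟨(integrable_indicator_iff hmeasz).1 hintz, ?_⟩
  have h1 : ∫ x : ℂ, (ball (0:ℂ) r).indicator f₂ (r • x)
      = r⁻¹ * ∫ x, (ball (0:ℂ) 1).indicator f₂ x := by
    rw [show (fun x : ℂ => (ball (0:ℂ) r).indicator f₂ (r • x))
        = fun x => r⁻¹ * (ball (0:ℂ) 1).indicator f₂ x from funext hscale]
    exact integral_const_mul _ _
  have h2 := MeasureTheory.Measure.integral_comp_smul (volume : Measure ℂ)
    ((ball (0:ℂ) r).indicator f₂) r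
  rw [h1, Complex.finrank_real_complex] at h2
  rw [abs_of_pos (by positivity : (0:ℝ) < ((r:ℝ) ^ 2)⁻¹), smul_eq_mul] at h2
  have hv : (∫ ζ in ball z r, ‖ζ - z‖⁻¹)
      = ∫ w : ℂ, (ball (0:ℂ) r).indicator f₂ w := by
    rw [← integral_indicator hmeasz, ← htrans_fun]
    exact integral_sub_right_eq_self ((ball (0:ℂ) r).indicator f₂) z
  rw [hv, ← integral_indicator hmeas1]
  set I1 := ∫ x : ℂ, (ball (0:ℂ) 1).indicator f₂ x with hI1
  set Iδ := ∫ w : ℂ, (ball (0:ℂ) r).indicator f₂ w with hIδ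
  have hr' : (r:ℝ) ≠ 0 := ne_of_gt hr
  field_simp at h2 ⊢
  nlinarith [h2, mul_pos hr hr]

set_option maxHeartbeats 1000000 in
/-- For a bounded open `D ⊆ ℂ` there is a constant `η(D) > 0` such that for all
`z, z0 ∈ ℂ` and `0 < δ < 1/2`,
`∫_{D \ B(z0,δ)} 1/(|ζ − z| |ζ − z0|²) dA(ζ) ≤ η(D)/δ`. -/
theorem stmt0 (D : Set ℂ) (hD : IsOpen D) (hDb : Bornology.IsBounded D) :
    ∃ η : ℝ, 0 < η ∧ ∀ (z z0 : ℂ) (δ : ℝ), 0 < δ → δ < 1/2 →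
      (∫ ζ in D \ ball z0 δ, 1 / (‖ζ - z‖ * ‖ζ - z0‖ ^ 2)) ≤ η / δ := by
  set C1 := ∫ x in (ball (0:ℂ) 1)ᶜ, (‖x‖ ^ 3)⁻¹ with hC1def
  set C2 := ∫ x in ball (0:ℂ) 1, ‖x‖⁻¹ with hC2def
  have hC1 : 0 ≤ C1 := setIntegral_nonneg measurableSet_ball.compl (fun x _ => by positivity)
  have hC2 : 0 ≤ C2 := setIntegral_nonneg measurableSet_ball (fun x _ => by positivity)
  refine ⟨2 * C1 + (9/2) * C2 + 1, by positivity, ?_⟩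
  intro z z0 δ hδ hδ'
  set S := D \ ball z0 δ with hSdef
  have hSm : MeasurableSet S := hD.measurableSet.diff measurableSet_ball
  have hSb : ∀ ζ ∈ S, δ ≤ ‖ζ - z0‖ := by
    intro ζ hζ
    have h := hζ.2
    simp only [mem_ball, dist_eq_norm, not_lt] at h
    exact h
  obtain ⟨hI1, hV1⟩ := my_key1 z0 hδ
  have hsub : S ⊆ (ball z0 δ)ᶜ := fun ζ hζ => hζ.2
  have hg1S : IntegrableOn (fun ζ : ℂ => 2 * (‖ζ - z0‖ ^ 3)⁻¹) S volume :=
    (hI1.mono_set hsub).const_mul 2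
  have hg1int : (∫ ζ in S, 2 * (‖ζ - z0‖ ^ 3)⁻¹) ≤ 2 * C1 / δ := by
    have h1 : (∫ ζ in S, 2 * (‖ζ - z0‖ ^ 3)⁻¹)
        ≤ ∫ ζ in (ball z0 δ)ᶜ, 2 * (‖ζ - z0‖ ^ 3)⁻¹ :=
      setIntegral_mono_set (hI1.const_mul 2)
        (Filter.Eventually.of_forall fun ζ => by positivity)
        (HasSubset.Subset.eventuallyLE hsub)
    have h2 : (∫ ζ in (ball z0 δ)ᶜ, 2 * (‖ζ - z0‖ ^ 3)⁻¹) = 2 * (C1 / δ) := by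
      rw [integral_const_mul, hV1]
    calc (∫ ζ in S, 2 * (‖ζ - z0‖ ^ 3)⁻¹)
        ≤ ∫ ζ in (ball z0 δ)ᶜ, 2 * (‖ζ - z0‖ ^ 3)⁻¹ := h1
      _ = 2 * (C1 / δ) := h2
      _ = 2 * C1 / δ := by ring
  have hcaseA : ∀ ζ, δ ≤ ‖ζ - z0‖ → ‖ζ - z0‖ ≤ 2 * ‖ζ - z‖ →
      1 / (‖ζ - z‖ * ‖ζ - z0‖ ^ 2) ≤ 2 * (‖ζ - z0‖ ^ 3)⁻¹ := by
    intro ζ hbδ hab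
    have hb0 : 0 < ‖ζ - z0‖ := lt_of_lt_of_le hδ hbδ
    have ha0 : 0 < ‖ζ - z‖ := by nlinarith
    have h2 : 2 * (‖ζ - z0‖ ^ 3)⁻¹ = 2 / ‖ζ - z0‖ ^ 3 := by
      rw [inv_eq_one_div]; ring
    rw [h2, div_le_div_iff₀ (by positivity) (by positivity)]
    nlinarith [sq_nonneg (‖ζ - z0‖), hb0, hab, ha0]
  by_cases hc : ‖z - z0‖ ≤ δ / 2
  · -- z is close to z0 : only case A happens on S
    have hpt : ∀ ζ ∈ S, 1 / (‖ζ - z‖ * ‖ζ - z0‖ ^ 2) ≤ 2 * (‖ζ - z0‖ ^ 3)⁻¹ := by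
      intro ζ hζ
      have hbδ := hSb ζ hζ
      refine hcaseA ζ hbδ ?_
      by_contra h
      push_neg at h
      have htri : ‖ζ - z0‖ ≤ ‖ζ - z‖ + ‖z - z0‖ := by
        have := norm_add_le (ζ - z) (z - z0)
        rwa [sub_add_sub_cancel] at this
      linarith
    calc (∫ ζ in S, 1 / (‖ζ - z‖ * ‖ζ - z0‖ ^ 2))
        ≤ ∫ ζ in S, 2 * (‖ζ - z0‖ ^ 3)⁻¹ :=
          integral_mono_of_nonneg (Filter.Eventually.of_forall fun ζ => by positivity)
            hg1S ((ae_restrict_iff' hSm).2 (Filter.Eventually.of_forall hpt))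
      _ ≤ 2 * C1 / δ := hg1int
      _ ≤ (2 * C1 + 9/2 * C2 + 1) / δ := by
          gcongr
          linarith
  · push_neg at hc
    have hc0 : 0 < ‖z - z0‖ := lt_trans (by positivity) hc
    obtain ⟨hI2, hV2⟩ := my_key2 z hc0
    set g2 : ℂ → ℝ := fun ζ =>
      9/4 * (‖z - z0‖ ^ 2)⁻¹ * (ball z ‖z - z0‖).indicator (fun ζ => ‖ζ - z‖⁻¹) ζ with hg2def
    have hg2nonneg : ∀ ζ, 0 ≤ g2 ζ := fun ζ =>
      mul_nonneg (by positivity) (indicator_nonneg (fun x _ => by positivity) ζ)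
    have hg2glob : Integrable g2 volume :=
      ((integrable_indicator_iff measurableSet_ball).2 hI2).const_mul _
    have hg2S : IntegrableOn g2 S volume := hg2glob.integrableOn
    have hpt : ∀ ζ ∈ S, 1 / (‖ζ - z‖ * ‖ζ - z0‖ ^ 2)
        ≤ 2 * (‖ζ - z0‖ ^ 3)⁻¹ + g2 ζ := by
      intro ζ hζ
      have hbδ := hSb ζ hζ
      have hb0 : 0 < ‖ζ - z0‖ := lt_of_lt_of_le hδ hbδ
      by_cases hab : ‖ζ - z0‖ ≤ 2 * ‖ζ - z‖
      · exact (hcaseA ζ hbδ hab).trans (le_add_of_nonneg_right (hg2nonneg ζ))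
      · push_neg at hab
        have htri : ‖ζ - z0‖ ≤ ‖ζ - z‖ + ‖z - z0‖ := by
          have := norm_add_le (ζ - z) (z - z0)
          rwa [sub_add_sub_cancel] at this
        have htri2 : ‖z - z0‖ ≤ ‖z - ζ‖ + ‖ζ - z0‖ := by
          have := norm_add_le (z - ζ) (ζ - z0)
          rwa [sub_add_sub_cancel] at this
        rw [norm_sub_rev z ζ] at htri2
        have hcb : ‖z - z0‖ < 3/2 * ‖ζ - z0‖ := by linarith
        have hac : ‖ζ - z‖ < ‖z - z0‖ := by linarith
        have hmemball : ζ ∈ ball z ‖z - z0‖ := mem_ball.2 (by rw [dist_eq_norm]; exact hac)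
        have hg2val : g2 ζ = 9/4 * (‖z - z0‖ ^ 2)⁻¹ * ‖ζ - z‖⁻¹ := by
          rw [hg2def]
          simp only [indicator_of_mem hmemball]
        rw [hg2val]
        refine le_add_of_nonneg_of_le (by positivity) ?_
        rcases eq_or_lt_of_le (norm_nonneg (ζ - z)) with ha | ha0
        · rw [← ha]
          simp
        · have hrhs : 9/4 * (‖z - z0‖ ^ 2)⁻¹ * ‖ζ - z‖⁻¹
              = 9 / (4 * (‖z - z0‖ ^ 2 * ‖ζ - z‖)) := by
            field_simp
          rw [hrhs, div_le_div_iff₀ (by positivity) (by positivity)]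
          have h4c : 4 * ‖z - z0‖ ^ 2 ≤ 9 * ‖ζ - z0‖ ^ 2 := by nlinarith [hcb, hc0, hb0]
          nlinarith [h4c, ha0]
    have hmono : (∫ ζ in S, 1 / (‖ζ - z‖ * ‖ζ - z0‖ ^ 2))
        ≤ ∫ ζ in S, (2 * (‖ζ - z0‖ ^ 3)⁻¹ + g2 ζ) :=
      integral_mono_of_nonneg (Filter.Eventually.of_forall fun ζ => by positivity)
        (hg1S.add hg2S) ((ae_restrict_iff' hSm).2 (Filter.Eventually.of_forall hpt))
    have hadd : (∫ ζ in S, (2 * (‖ζ - z0‖ ^ 3)⁻¹ + g2 ζ))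
        = (∫ ζ in S, 2 * (‖ζ - z0‖ ^ 3)⁻¹) + ∫ ζ in S, g2 ζ :=
      integral_add hg1S hg2S
    have hg2int : (∫ ζ in S, g2 ζ) ≤ 9/2 * C2 / δ := by
      have h1 : (∫ ζ in S, g2 ζ)
          = 9/4 * (‖z - z0‖ ^ 2)⁻¹ *
            ∫ ζ in S, (ball z ‖z - z0‖).indicator (fun ζ => ‖ζ - z‖⁻¹) ζ := by
        rw [hg2def]; exact integral_const_mul _ _
      have h2 : (∫ ζ in S, (ball z ‖z - z0‖).indicator (fun ζ => ‖ζ - z‖⁻¹) ζ)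
          ≤ ∫ ζ, (ball z ‖z - z0‖).indicator (fun ζ => ‖ζ - z‖⁻¹) ζ :=
        setIntegral_le_integral ((integrable_indicator_iff measurableSet_ball).2 hI2)
          (Filter.Eventually.of_forall fun ζ => indicator_nonneg (fun x _ => by positivity) ζ)
      have h3 : (∫ ζ, (ball z ‖z - z0‖).indicator (fun ζ => ‖ζ - z‖⁻¹) ζ)
          = C2 * ‖z - z0‖ := by
        rw [integral_indicator measurableSet_ball, hV2]
      have h4 : 9/4 * (‖z - z0‖ ^ 2)⁻¹ * (C2 * ‖z - z0‖) = 9/4 * C2 / ‖z - z0‖ := by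
        have hcz : ‖z - z0‖ ≠ 0 := ne_of_gt hc0
        rw [eq_div_iff hcz]
        have hcc : ‖z - z0‖ ^ 2 * (‖z - z0‖ ^ 2)⁻¹ = 1 := mul_inv_cancel₀ (by positivity)
        linear_combination (9/4 * C2) * hcc
      calc (∫ ζ in S, g2 ζ)
          ≤ 9/4 * (‖z - z0‖ ^ 2)⁻¹ * (C2 * ‖z - z0‖) := by
            rw [h1]
            exact mul_le_mul_of_nonneg_left (h2.trans_eq h3) (by positivity)
        _ = 9/4 * C2 / ‖z - z0‖ := h4
        _ ≤ 9/4 * C2 / (δ/2) := by gcongr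
        _ = 9/2 * C2 / δ := by
            have hδ0 : δ ≠ 0 := ne_of_gt hδ
            field_simp
            ring
    calc (∫ ζ in S, 1 / (‖ζ - z‖ * ‖ζ - z0‖ ^ 2))
        ≤ (∫ ζ in S, 2 * (‖ζ - z0‖ ^ 3)⁻¹) + ∫ ζ in S, g2 ζ := hmono.trans_eq hadd
      _ ≤ 2 * C1 / δ + 9/2 * C2 / δ := add_le_add hg1int hg2int
      _ ≤ (2 * C1 + 9/2 * C2 + 1) / δ := by
          rw [← add_div]
          gcongr ?x / δ
          linarith
end

section
/- Let D ⊂ ℂ be a bounded open set and let T and T̄_{z0,λ} satisfy the bounds: ‖T w‖_{C(closure D)} ≤ η₁ ‖w‖_{C(closure D)} for continuous w, ‖T̄_{z0,λ} u‖_{C(closure D)} ≤ η₂ |λ|^{−1/2} ‖u‖ for u with continuous ∂/∂z̄, and the pointwise bound |T̄_{z0,λ} u(ζ)| ≤ η₃ log(3|λ|)(1+|ζ−z0|)/(|λ||ζ−z0|²) ‖u‖ for ζ ≠ z0. Then the composition g_{z0,λ} = (1/4) T ∘ T̄_{z0,λ} satisfies ‖g_{z0,λ} u‖_{C(closure D)}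 ≤ η(D) (log(3|λ|)/|λ|^{3/4}) ‖u‖ for |λ| ≥ 1, for some constant η(D) depending only on D (and η₁, η₂, η₃). -/
open MeasureTheory ComplexConjugate
open scoped ENNReal NNReal

/-- Max entrywise modulus of a complex matrix. -/
noncomputable def mnorm {n : ℕ} (M : Matrix (Fin n) (Fin n) ℂ) : ℝ :=
  ⨆ i, ⨆ j, ‖M i j‖

/-- The Wirtinger derivative `∂/∂z̄ = (1/2)(∂/∂x₁ + i ∂/∂x₂)`. -/
noncomputable def dbar (f : ℂ → ℂ) (z : ℂ) : ℂ :=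
  (1 / 2) * (fderiv ℝ f z 1 + Complex.I * fderiv ℝ f z Complex.I)

/-- `u` and `∂u/∂z̄` are continuous on `closure D` (the space `C¹_z̄(closure D)`), entrywise. -/
def C1zbarOn {n : ℕ} (D : Set ℂ) (u : ℂ → Matrix (Fin n) (Fin n) ℂ) : Prop :=
  (∀ i j, ContinuousOn (fun z => u z i j) (closure D)) ∧
  (∀ i j, ∀ z ∈ D, DifferentiableAt ℝ (fun w => u w i j) z) ∧
  (∀ i j, ContinuousOn (dbar fun z => u z i j) (closure D))

/-- The `C¹_z̄` norm: max of the sup norms of `u` and `∂u/∂z̄` over `closure D`. -/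
noncomputable def c1norm {n : ℕ} (D : Set ℂ) (u : ℂ → Matrix (Fin n) (Fin n) ℂ) : ℝ :=
  max (⨆ z : closure D, mnorm (u (z : ℂ)))
      (⨆ z : closure D, mnorm (Matrix.of fun i j => dbar (fun w => u w i j) (z : ℂ)))


lemma volball (c : ℂ) (s : ℝ) (hs : 0 ≤ s) :
    volume (Metric.ball c s) = ENNReal.ofReal (Real.pi * s ^ 2) := by
  rw [Complex.volume_ball, ← ENNReal.ofReal_pow hs, ← NNReal.coe_real_pi,
    ENNReal.ofReal_coe_nnreal.symm, ← ENNReal.ofReal_mul (by positivity), mul_comm]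

lemma tsum_half_pow : ∑' k : ℕ, ((2 : ℝ≥0∞)⁻¹) ^ k = 2 := by
  rw [ENNReal.tsum_geometric, ENNReal.one_sub_inv_two, inv_inv]

lemma lint_ball_inv (z : ℂ) (r : ℝ) (hr : 0 < r) :
    ∫⁻ ζ in Metric.ball z r, ENNReal.ofReal (‖ζ - z‖)⁻¹ ≤
      ENNReal.ofReal (8 * Real.pi * r) := by
  set A : ℕ → Set ℂ := fun k =>
    Metric.ball z ((2⁻¹ : ℝ) ^ k * r) \ Metric.ball z ((2⁻¹ : ℝ) ^ (k + 1) * r) with hA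
  have hcover : Metric.ball z r ⊆ {z} ∪ ⋃ k, A k := by
    intro ζ hζ
    rcases eq_or_ne ζ z with h | h
    · exact Or.inl (by simp [h])
    · right
      have hpos : 0 < dist ζ z := dist_pos.2 h
      have hex : ∃ k : ℕ, (2⁻¹ : ℝ) ^ (k + 1) * r ≤ dist ζ z := by
        obtain ⟨k, hk⟩ := exists_pow_lt_of_lt_one (div_pos hpos hr)
          (by norm_num : (2⁻¹ : ℝ) < 1)
        exact ⟨k, by
          have : (2⁻¹ : ℝ) ^ (k + 1) ≤ (2⁻¹ : ℝ) ^ k := by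
            apply pow_le_pow_of_le_one (by norm_num) (by norm_num); omega
          nlinarith [ (lt_div_iff₀ hr).1 hk ] ⟩
      refine Set.mem_iUnion.2 ⟨Nat.find hex, ?_, ?_⟩
      · rcases Nat.eq_zero_or_pos (Nat.find hex) with h0 | h0
        · rw [Metric.mem_ball, h0, pow_zero, one_mul]; exact Metric.mem_ball.1 hζ
        · have := Nat.find_min hex (m := Nat.find hex - 1) (by omega)
          rw [Metric.mem_ball]
          push_neg at this
          calc dist ζ z < (2⁻¹:ℝ) ^ (Nat.find hex - 1 + 1) * r := this
            _ = (2⁻¹:ℝ) ^ (Nat.find hex) * r := by congr 2; omega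
      · have := Nat.find_spec hex
        simp only [Metric.mem_ball, not_lt]
        exact this
  calc ∫⁻ ζ in Metric.ball z r, ENNReal.ofReal (‖ζ - z‖)⁻¹
      ≤ ∫⁻ ζ in {z} ∪ ⋃ k, A k, ENNReal.ofReal (‖ζ - z‖)⁻¹ :=
        lintegral_mono_set hcover
    _ ≤ (∫⁻ ζ in ({z} : Set ℂ), ENNReal.ofReal (‖ζ - z‖)⁻¹)
        + ∫⁻ ζ in ⋃ k, A k, ENNReal.ofReal (‖ζ - z‖)⁻¹ :=
        lintegral_union_le _ _ _
    _ ≤ 0 + ∑' k, ∫⁻ ζ in A k, ENNReal.ofReal (‖ζ - z‖)⁻¹ := by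
        gcongr
        · rw [setLIntegral_measure_zero _ _ (measure_singleton z)]
        · exact lintegral_iUnion_le _ _
    _ ≤ ∑' k : ℕ, ENNReal.ofReal (4 * Real.pi * r) * ((2:ℝ≥0∞)⁻¹) ^ k := by
        rw [zero_add]
        apply ENNReal.tsum_le_tsum
        intro k
        have h1 : ∫⁻ ζ in A k, ENNReal.ofReal (‖ζ - z‖)⁻¹
            ≤ ∫⁻ _ in A k, ENNReal.ofReal ((2⁻¹ : ℝ) ^ (k+1) * r)⁻¹ := by
          apply setLIntegral_mono measurable_const
          intro ζ hζ
          apply ENNReal.ofReal_le_ofReal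
          have hlb : (2⁻¹ : ℝ) ^ (k+1) * r ≤ ‖ζ - z‖ := by
            have := hζ.2
            rw [Metric.mem_ball, not_lt, Complex.dist_eq] at this
            exact this
          exact inv_anti₀ (by positivity) hlb
        refine h1.trans ?_
        rw [setLIntegral_const]
        have h2 : volume (A k) ≤ ENNReal.ofReal (Real.pi * ((2⁻¹:ℝ)^k * r)^2) := by
          rw [← volball z _ (by positivity)]
          exact measure_mono Set.diff_subset
        calc ENNReal.ofReal ((2⁻¹ : ℝ) ^ (k+1) * r)⁻¹ * volume (A k)
            ≤ ENNReal.ofReal ((2⁻¹ : ℝ) ^ (k+1) * r)⁻¹ *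
              ENNReal.ofReal (Real.pi * ((2⁻¹:ℝ)^k * r)^2) := by gcongr
          _ = ENNReal.ofReal (((2⁻¹ : ℝ) ^ (k+1) * r)⁻¹ * (Real.pi * ((2⁻¹:ℝ)^k * r)^2)) := by
              rw [← ENNReal.ofReal_mul (by positivity)]
          _ ≤ ENNReal.ofReal ((4 * Real.pi * r) * (2⁻¹:ℝ)^k) := by
              apply ENNReal.ofReal_le_ofReal
              have ht : (0:ℝ) < (2⁻¹:ℝ)^k := by positivity
              have heq : ((2⁻¹ : ℝ) ^ (k+1) * r)⁻¹ * (Real.pi * ((2⁻¹:ℝ)^k * r)^2)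
                  = 2 * Real.pi * r * (2⁻¹:ℝ)^k := by
                rw [pow_succ]; field_simp
              rw [heq]
              nlinarith [mul_pos (mul_pos Real.pi_pos hr) ht]
          _ = ENNReal.ofReal (4 * Real.pi * r) * ((2:ℝ≥0∞)⁻¹) ^ k := by
              rw [ENNReal.ofReal_mul (by positivity), ENNReal.ofReal_pow (by norm_num)]
              congr 1
              rw [ENNReal.ofReal_inv_of_pos (by norm_num)]
              norm_num
    _ = ENNReal.ofReal (4 * Real.pi * r) * 2 := by
        rw [ENNReal.tsum_mul_left, tsum_half_pow]
    _ ≤ ENNReal.ofReal (8 * Real.pi * r) := by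
        rw [← ENNReal.ofReal_ofNat, ← ENNReal.ofReal_mul (by positivity)]
        apply ENNReal.ofReal_le_ofReal; ring_nf; linarith [Real.pi_pos.le, hr.le]

lemma lint_compl_inv3 (z0 : ℂ) (δ : ℝ) (hδ : 0 < δ) :
    ∫⁻ ζ in (Metric.ball z0 δ)ᶜ, ENNReal.ofReal ((‖ζ - z0‖ ^ 3)⁻¹) ≤
      ENNReal.ofReal (16 * Real.pi / δ) := by
  set A : ℕ → Set ℂ := fun k =>
    Metric.ball z0 ((2 : ℝ) ^ (k + 1) * δ) \ Metric.ball z0 ((2 : ℝ) ^ k * δ) with hA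
  have hcover : (Metric.ball z0 δ)ᶜ ⊆ ⋃ k, A k := by
    intro ζ hζ
    have hge : δ ≤ dist ζ z0 := by
      rw [Set.mem_compl_iff, Metric.mem_ball, not_lt] at hζ; exact hζ
    have hex : ∃ k : ℕ, dist ζ z0 < (2 : ℝ) ^ (k + 1) * δ := by
      obtain ⟨k, hk⟩ := pow_unbounded_of_one_lt (dist ζ z0 / δ) (by norm_num : (1:ℝ) < 2)
      refine ⟨k, ?_⟩
      have h2 : (2:ℝ) ^ k ≤ (2:ℝ) ^ (k+1) := by
        apply pow_le_pow_right₀ (by norm_num); omega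
      nlinarith [(div_lt_iff₀ hδ).1 hk]
    refine Set.mem_iUnion.2 ⟨Nat.find hex, Metric.mem_ball.2 (Nat.find_spec hex), ?_⟩
    · rcases Nat.eq_zero_or_pos (Nat.find hex) with h0 | h0
      · rw [Metric.mem_ball, h0, pow_zero, one_mul]; exact not_lt.2 hge
      · have := Nat.find_min hex (m := Nat.find hex - 1) (by omega)
        rw [Metric.mem_ball]
        have heq : Nat.find hex - 1 + 1 = Nat.find hex := by omega
        rw [heq] at this
        exact this
  calc ∫⁻ ζ in (Metric.ball z0 δ)ᶜ, ENNReal.ofReal ((‖ζ - z0‖ ^ 3)⁻¹)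
      ≤ ∫⁻ ζ in ⋃ k, A k, ENNReal.ofReal ((‖ζ - z0‖ ^ 3)⁻¹) :=
        lintegral_mono_set hcover
    _ ≤ ∑' k, ∫⁻ ζ in A k, ENNReal.ofReal ((‖ζ - z0‖ ^ 3)⁻¹) :=
        lintegral_iUnion_le _ _
    _ ≤ ∑' k : ℕ, ENNReal.ofReal (8 * Real.pi / δ) * ((2:ℝ≥0∞)⁻¹) ^ k := by
        apply ENNReal.tsum_le_tsum
        intro k
        have h1 : ∫⁻ ζ in A k, ENNReal.ofReal ((‖ζ - z0‖ ^ 3)⁻¹)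
            ≤ ∫⁻ _ in A k, ENNReal.ofReal (((2 : ℝ) ^ k * δ) ^ 3)⁻¹ := by
          apply setLIntegral_mono measurable_const
          intro ζ hζ
          apply ENNReal.ofReal_le_ofReal
          have hlb : (2 : ℝ) ^ k * δ ≤ ‖ζ - z0‖ := by
            have := hζ.2
            rw [Metric.mem_ball, not_lt, Complex.dist_eq] at this
            exact this
          apply inv_anti₀ (by positivity)
          gcongr
        refine h1.trans ?_
        rw [setLIntegral_const]
        have h2 : volume (A k) ≤ ENNReal.ofReal (Real.pi * ((2:ℝ)^(k+1) * δ)^2) := by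
          rw [← volball z0 _ (by positivity)]
          exact measure_mono Set.diff_subset
        calc ENNReal.ofReal (((2 : ℝ) ^ k * δ) ^ 3)⁻¹ * volume (A k)
            ≤ ENNReal.ofReal (((2 : ℝ) ^ k * δ) ^ 3)⁻¹ *
              ENNReal.ofReal (Real.pi * ((2:ℝ)^(k+1) * δ)^2) := by gcongr
          _ = ENNReal.ofReal ((((2 : ℝ) ^ k * δ) ^ 3)⁻¹ * (Real.pi * ((2:ℝ)^(k+1) * δ)^2)) := by
              rw [← ENNReal.ofReal_mul (by positivity)]
          _ ≤ ENNReal.ofReal ((8 * Real.pi / δ) * (2⁻¹:ℝ)^k) := by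
              apply ENNReal.ofReal_le_ofReal
              have ht : (0:ℝ) < (2:ℝ)^k := by positivity
              have heq : (((2 : ℝ) ^ k * δ) ^ 3)⁻¹ * (Real.pi * ((2:ℝ)^(k+1) * δ)^2)
                  = 4 * Real.pi / δ * (2⁻¹:ℝ)^k := by
                rw [pow_succ, inv_pow]
                field_simp
                ring
              rw [heq]
              have h3 : (0:ℝ) ≤ (2⁻¹:ℝ)^k := by positivity
              have h4 : 4 * Real.pi / δ ≤ 8 * Real.pi / δ := by
                gcongr
                nlinarith [Real.pi_pos]
              exact mul_le_mul_of_nonneg_right h4 h3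
          _ = ENNReal.ofReal (8 * Real.pi / δ) * ((2:ℝ≥0∞)⁻¹) ^ k := by
              rw [ENNReal.ofReal_mul (by positivity), ENNReal.ofReal_pow (by norm_num)]
              congr 1
              rw [ENNReal.ofReal_inv_of_pos (by norm_num)]
              norm_num
    _ = ENNReal.ofReal (8 * Real.pi / δ) * 2 := by
        rw [ENNReal.tsum_mul_left, tsum_half_pow]
    _ ≤ ENNReal.ofReal (16 * Real.pi / δ) := by
        rw [← ENNReal.ofReal_ofNat, ← ENNReal.ofReal_mul (by positivity)]
        exact le_of_eq (by ring)

lemma mnorm_nonneg {n : ℕ} (M : Matrix (Fin n) (Fin n) ℂ) : 0 ≤ mnorm M :=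
  Real.iSup_nonneg fun i => Real.iSup_nonneg fun j => (norm_nonneg _)

lemma abs_entry_le_mnorm {n : ℕ} (M : Matrix (Fin n) (Fin n) ℂ) (i j : Fin n) :
    ‖M i j‖ ≤ mnorm M := by
  have h1 : ‖M i j‖ ≤ ⨆ j', ‖M i j'‖ :=
    le_ciSup (f := fun j' => ‖M i j'‖) (Set.Finite.bddAbove (Set.finite_range _)) j
  exact h1.trans (le_ciSup (f := fun i' => ⨆ j', ‖M i' j'‖)
    (Set.Finite.bddAbove (Set.finite_range _)) i)

lemma mnorm_le {n : ℕ} (M : Matrix (Fin n) (Fin n) ℂ) {C : ℝ} (hC : 0 ≤ C)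
    (h : ∀ i j, ‖M i j‖ ≤ C) : mnorm M ≤ C :=
  Real.iSup_le (fun i => Real.iSup_le (h i) hC) hC

lemma c1norm_nonneg {n : ℕ} (D : Set ℂ) (u : ℂ → Matrix (Fin n) (Fin n) ℂ) :
    0 ≤ c1norm D u :=
  le_trans (Real.iSup_nonneg fun z => mnorm_nonneg _) (le_max_left _ _)


lemma aux_ineq1 {a b d' : ℝ} (ha : 0 < a) (hd : 0 < d') (hdb : d' ≤ b) (hba : b ≤ 2*a) :
    (1+b)/b^2 * a⁻¹ ≤ 2*(b^3)⁻¹ + d'⁻¹ * a⁻¹ := by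
  have hb : 0 < b := lt_of_lt_of_le hd hdb
  rw [div_mul_eq_mul_div, div_le_iff₀ (by positivity)]
  field_simp
  nlinarith [mul_le_mul_of_nonneg_right hba hd.le, mul_le_mul_of_nonneg_left hdb (sq_nonneg b),
    mul_le_mul_of_nonneg_right hba (by positivity : (0:ℝ) ≤ b^2*d'*a),
    mul_le_mul_of_nonneg_right hdb (by positivity : (0:ℝ) ≤ b^3*a)]

lemma aux_ineq2 {b d' d : ℝ} (hd : 0 < d') (hdd : 0 < d) (hdb : d' ≤ b) (hdb2 : 2*d/3 ≤ b) :
    (1+b)/b^2 ≤ (d'*(2*d/3))⁻¹ + (2*d/3)⁻¹ := by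
  have hb : 0 < b := lt_of_lt_of_le hd hdb
  have h1 : (1:ℝ)/b^2 ≤ (d'*(2*d/3))⁻¹ := by
    rw [one_div]
    apply inv_anti₀ (by positivity)
    calc d'*(2*d/3) ≤ b * b := by nlinarith
      _ = b^2 := (sq b).symm
  have h2 : b/b^2 ≤ (2*d/3)⁻¹ := by
    rw [sq, div_mul_eq_div_div, div_self hb.ne', one_div]
    exact inv_anti₀ (by positivity) hdb2
  calc (1+b)/b^2 = 1/b^2 + b/b^2 := by ring
    _ ≤ (d'*(2*d/3))⁻¹ + (2*d/3)⁻¹ := add_le_add h1 h2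

set_option maxHeartbeats 2000000 in
/-- composition bound. With `T` the Cauchy transform (applied entrywise) and
`T̄_{z0,λ}` any family of operators satisfying the uniform bound `η₂|λ|^{-1/2}‖u‖` and the
pointwise bound `η₃ log(3|λ|)(1+|ζ-z0|)/(|λ||ζ-z0|²)‖u‖`, the composition
`g_{z0,λ} = (1/4) T ∘ T̄_{z0,λ}` satisfies
`‖g_{z0,λ} u‖_{C(closure D)} ≤ η(D) (log(3|λ|)/|λ|^{3/4}) ‖u‖_{C¹_z̄}` for `|λ| ≥ 1`. -/
theorem stmt11 (n : ℕ) (D : Set ℂ) (hD : IsOpen D) (hDb : Bornology.IsBounded D)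
    (Tb : ℂ → ℂ → (ℂ → Matrix (Fin n) (Fin n) ℂ) → ℂ → Matrix (Fin n) (Fin n) ℂ)
    (η₁ η₂ η₃ : ℝ) (hη₁ : 0 < η₁) (hη₂ : 0 < η₂) (hη₃ : 0 < η₃)
    (hT : ∀ w : ℂ → ℂ, ContinuousOn w (closure D) → ∀ z ∈ closure D,
      ‖(-(1 / (Real.pi : ℂ)) * ∫ ζ in D, w ζ / (ζ - z))‖ ≤
        η₁ * ⨆ ζ : closure D, ‖w ζ‖)
    (hTb1 : ∀ (z0 lam : ℂ), 1 ≤ ‖lam‖ →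
      ∀ u : ℂ → Matrix (Fin n) (Fin n) ℂ, C1zbarOn D u → ∀ ζ ∈ closure D,
        mnorm (Tb z0 lam u ζ) ≤ η₂ / Real.sqrt (‖lam‖) * c1norm D u)
    (hTb2 : ∀ (z0 lam : ℂ), 1 ≤ ‖lam‖ →
      ∀ u : ℂ → Matrix (Fin n) (Fin n) ℂ, C1zbarOn D u → ∀ ζ ∈ closure D, ζ ≠ z0 →
        mnorm (Tb z0 lam u ζ) ≤
          η₃ * Real.log (3 * ‖lam‖) * (1 + ‖ζ - z0‖) /
            (‖lam‖ * ‖ζ - z0‖ ^ 2) * c1norm D u) :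
    ∃ η : ℝ, 0 < η ∧ ∀ (z0 lam : ℂ), 1 ≤ ‖lam‖ →
      ∀ u : ℂ → Matrix (Fin n) (Fin n) ℂ, C1zbarOn D u → ∀ z ∈ closure D,
        mnorm (Matrix.of fun i j =>
            (1 / 4 : ℂ) * (-(1 / (Real.pi : ℂ)) * ∫ ζ in D, Tb z0 lam u ζ i j / (ζ - z))) ≤
          η * (Real.log (3 * ‖lam‖) / ‖lam‖ ^ (3/4 : ℝ)) * c1norm D u := by
  classical
  -- geometry of D
  obtain ⟨R₀, hDR₀⟩ := hDb.subset_ball 0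
  set R : ℝ := max R₀ 1 with hRdef
  have hR1 : (1:ℝ) ≤ R := le_max_right _ _
  have hR0 : (0:ℝ) < R := lt_of_lt_of_le one_pos hR1
  have hDR : D ⊆ Metric.ball 0 R := hDR₀.trans (Metric.ball_subset_ball (le_max_left _ _))
  have hclos : closure D ⊆ Metric.closedBall 0 R :=
    (closure_mono hDR).trans Metric.closure_ball_subset_closedBall
  set R' : ℝ := 2 * R + 1 with hR'def
  have hR'0 : (0:ℝ) < R' := by positivity
  set η : ℝ := Real.pi * (9 * η₂ + 16 * (R' + 7) * η₃) + 1 with hηdef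
  have hη : 0 < η := by positivity
  refine ⟨η, hη, ?_⟩
  intro z0 lam hlam u hu z hz
  set L : ℝ := ‖lam‖ with hLdef
  have hL0 : (0:ℝ) < L := lt_of_lt_of_le one_pos hlam
  set K : ℝ := c1norm D u with hKdef
  have hK : 0 ≤ K := c1norm_nonneg D u
  have hlog : 1 ≤ Real.log (3 * L) := by
    have h3 : Real.exp 1 ≤ 3 * L := by nlinarith [Real.exp_one_lt_d9.le]
    calc (1:ℝ) = Real.log (Real.exp 1) := (Real.log_exp 1).symm
      _ ≤ Real.log (3*L) := Real.log_le_log (Real.exp_pos 1) h3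
  have hLpow : (0:ℝ) < L ^ ((3:ℝ)/4) := Real.rpow_pos_of_pos hL0 _
  have hRHS : 0 ≤ η * (Real.log (3 * L) / L ^ (3/4 : ℝ)) * K :=
    mul_nonneg (mul_nonneg hη.le (div_nonneg (by linarith) hLpow.le)) hK
  apply mnorm_le _ hRHS
  intro i j
  simp only [Matrix.of_apply]
  by_cases hint : IntegrableOn (fun ζ => Tb z0 lam u ζ i j / (ζ - z)) D volume
  swap
  · rw [integral_undef hint, mul_zero, mul_zero, norm_zero]
    exact hRHS
  -- reduce to the integral of the norm
  have habs : ‖(1/4 : ℂ) * (-(1 / (Real.pi : ℂ)) *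
      ∫ ζ in D, Tb z0 lam u ζ i j / (ζ - z))‖ ≤
      ∫ ζ in D, ‖Tb z0 lam u ζ i j / (ζ - z)‖ := by
    rw [norm_mul, norm_mul, norm_neg]
    have h1 : ‖(1/4 : ℂ)‖ = 1/4 := by
      rw [norm_div, norm_one]; norm_num
    have h2 : ‖1 / (Real.pi : ℂ)‖ = 1 / Real.pi := by
      rw [norm_div, norm_one, Complex.norm_real, Real.norm_eq_abs, abs_of_pos Real.pi_pos]
    rw [h1, h2]
    have h3 : ‖∫ ζ in D, Tb z0 lam u ζ i j / (ζ - z)‖ ≤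
        ∫ ζ in D, ‖Tb z0 lam u ζ i j / (ζ - z)‖ := by
      exact norm_integral_le_integral_norm _
    have h4 : (0:ℝ) ≤ ‖∫ ζ in D, Tb z0 lam u ζ i j / (ζ - z)‖ :=
      norm_nonneg _
    have h5 : 1/Real.pi ≤ 1/3 := by
      rw [div_le_div_iff₀ Real.pi_pos (by norm_num)]
      nlinarith [Real.pi_gt_three]
    nlinarith [mul_le_mul_of_nonneg_right h5 h4]
  refine habs.trans ?_
  -- pass to lintegral
  have hnormint : ∫ ζ in D, ‖Tb z0 lam u ζ i j / (ζ - z)‖ =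
      (∫⁻ ζ in D, ENNReal.ofReal ‖Tb z0 lam u ζ i j / (ζ - z)‖).toReal :=
    integral_eq_lintegral_of_nonneg_ae (Filter.Eventually.of_forall fun ζ => norm_nonneg _)
      hint.norm.aestronglyMeasurable
  rw [hnormint]
  apply ENNReal.toReal_le_of_le_ofReal hRHS
  -- setup for the splitting
  set δ : ℝ := L ^ (-(1/4) : ℝ) / 2 with hδdef
  have hδ0 : (0:ℝ) < δ := by
    have := Real.rpow_pos_of_pos hL0 (-(1/4) : ℝ); positivity
  have hδle : δ ≤ 1/2 := by
    have : L ^ (-(1/4) : ℝ) ≤ 1 := Real.rpow_le_one_of_one_le_of_nonpos hlam (by norm_num)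
    rw [hδdef]; linarith
  set C1 : ℝ := η₂ / Real.sqrt L * K with hC1def
  have hC1 : 0 ≤ C1 := mul_nonneg (div_nonneg hη₂.le (Real.sqrt_nonneg _)) hK
  set C2 : ℝ := η₃ * Real.log (3*L) * K / L with hC2def
  have hC2 : 0 ≤ C2 := by
    apply div_nonneg _ hL0.le
    exact mul_nonneg (mul_nonneg hη₃.le (by linarith)) hK
  have hmeas_a : Measurable fun ζ : ℂ => ENNReal.ofReal (‖ζ - z‖)⁻¹ :=
    ((continuous_norm.comp (continuous_id.sub continuous_const)).measurable).inv.ennreal_ofReal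
  have hmeas_b3 : Measurable fun ζ : ℂ => ENNReal.ofReal ((‖ζ - z0‖ ^ 3)⁻¹) :=
    (((continuous_norm.comp (continuous_id.sub continuous_const)).pow 3).measurable).inv.ennreal_ofReal
  -- D sits in a ball around z
  have hDz : D ⊆ Metric.ball z R' := by
    intro ζ hζ
    have h1 : dist ζ 0 < R := Metric.mem_ball.1 (hDR hζ)
    have h2 : dist z 0 ≤ R := Metric.mem_closedBall.1 (hclos hz)
    have := dist_triangle ζ 0 z
    rw [Metric.mem_ball]
    rw [dist_comm z 0] at h2
    rw [hR'def]; linarith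
  have hintD_a : ∫⁻ ζ in D, ENNReal.ofReal (‖ζ - z‖)⁻¹ ≤
      ENNReal.ofReal (8 * Real.pi * R') :=
    (lintegral_mono_set hDz).trans (lint_ball_inv z R' hR'0)
  -- pointwise norm formula
  have hF : ∀ ζ : ℂ, ‖Tb z0 lam u ζ i j / (ζ - z)‖ =
      ‖Tb z0 lam u ζ i j‖ * (‖ζ - z‖)⁻¹ := by
    intro ζ
    rw [norm_div, div_eq_mul_inv]
  have hb1 : ∀ ζ ∈ D, ‖Tb z0 lam u ζ i j‖ ≤ η₂ / Real.sqrt L * K :=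
    fun ζ hζ => (abs_entry_le_mnorm _ i j).trans (hTb1 z0 lam hlam u hu ζ (subset_closure hζ))
  have hb2 : ∀ ζ ∈ D, ζ ≠ z0 → ‖Tb z0 lam u ζ i j‖ ≤
      η₃ * Real.log (3 * L) * (1 + ‖ζ - z0‖) /
        (L * ‖ζ - z0‖ ^ 2) * K :=
    fun ζ hζ hne => (abs_entry_le_mnorm _ i j).trans
      (hTb2 z0 lam hlam u hu ζ (subset_closure hζ) hne)
  set B : Set ℂ := Metric.ball z0 δ with hBdef
  -- Term 1 : near z0
  have term1 : ∫⁻ ζ in D ∩ B, ENNReal.ofReal ‖Tb z0 lam u ζ i j / (ζ - z)‖ ≤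
      ENNReal.ofReal (C1 * (17 * Real.pi * δ)) := by
    have hpt : ∀ ζ ∈ D ∩ B, ENNReal.ofReal ‖Tb z0 lam u ζ i j / (ζ - z)‖ ≤
        ENNReal.ofReal C1 * ENNReal.ofReal (‖ζ - z‖)⁻¹ := by
      intro ζ hζ
      rw [← ENNReal.ofReal_mul hC1]
      apply ENNReal.ofReal_le_ofReal
      rw [hF ζ]
      exact mul_le_mul_of_nonneg_right (hb1 ζ hζ.1) (inv_nonneg.2 (norm_nonneg _))
    calc ∫⁻ ζ in D ∩ B, ENNReal.ofReal ‖Tb z0 lam u ζ i j / (ζ - z)‖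
        ≤ ∫⁻ ζ in D ∩ B, ENNReal.ofReal C1 * ENNReal.ofReal (‖ζ - z‖)⁻¹ :=
          setLIntegral_mono (measurable_const.mul hmeas_a) hpt
      _ = ENNReal.ofReal C1 * ∫⁻ ζ in D ∩ B, ENNReal.ofReal (‖ζ - z‖)⁻¹ :=
          lintegral_const_mul _ hmeas_a
      _ ≤ ENNReal.ofReal C1 * ENNReal.ofReal (17 * Real.pi * δ) := by
          gcongr
          have hsub : D ∩ B ⊆ Metric.ball z (2*δ) ∪ (B \ Metric.ball z (2*δ)) := by
            intro ζ hζ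
            by_cases h : ζ ∈ Metric.ball z (2*δ)
            · exact Or.inl h
            · exact Or.inr ⟨hζ.2, h⟩
          refine le_trans (lintegral_mono_set hsub) ?_
          refine le_trans (lintegral_union_le _ _ _) ?_
          have p1 : ∫⁻ ζ in Metric.ball z (2*δ), ENNReal.ofReal (‖ζ - z‖)⁻¹ ≤
              ENNReal.ofReal (8 * Real.pi * (2*δ)) := lint_ball_inv z (2*δ) (by linarith)
          have p2 : ∫⁻ ζ in B \ Metric.ball z (2*δ), ENNReal.ofReal (‖ζ - z‖)⁻¹ ≤
              ENNReal.ofReal (Real.pi * δ) := by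
            have h5 : ∫⁻ ζ in B \ Metric.ball z (2*δ), ENNReal.ofReal (‖ζ - z‖)⁻¹ ≤
                ∫⁻ _ in B \ Metric.ball z (2*δ), ENNReal.ofReal (2*δ)⁻¹ := by
              apply setLIntegral_mono measurable_const
              intro ζ hζ
              apply ENNReal.ofReal_le_ofReal
              apply inv_anti₀ (by linarith)
              have h6 := hζ.2
              rw [Metric.mem_ball, not_lt, Complex.dist_eq] at h6
              exact h6
            refine h5.trans ?_
            rw [setLIntegral_const]
            calc ENNReal.ofReal (2*δ)⁻¹ * volume (B \ Metric.ball z (2*δ))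
                ≤ ENNReal.ofReal (2*δ)⁻¹ * ENNReal.ofReal (Real.pi * δ^2) := by
                  gcongr
                  rw [← volball z0 δ hδ0.le]
                  exact measure_mono Set.diff_subset
              _ = ENNReal.ofReal ((2*δ)⁻¹ * (Real.pi * δ^2)) := by
                  rw [← ENNReal.ofReal_mul (by positivity)]
              _ ≤ ENNReal.ofReal (Real.pi * δ) := by
                  apply ENNReal.ofReal_le_ofReal
                  rw [show (2*δ)⁻¹ * (Real.pi * δ^2) = Real.pi * δ / 2 by field_simp]
                  linarith [mul_pos Real.pi_pos hδ0]
          refine le_trans (add_le_add p1 p2) ?_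
          rw [← ENNReal.ofReal_add (by positivity) (by positivity)]
          apply ENNReal.ofReal_le_ofReal
          nlinarith [Real.pi_pos, hδ0]
      _ = ENNReal.ofReal (C1 * (17 * Real.pi * δ)) := by
          rw [← ENNReal.ofReal_mul hC1]
  -- Term 2 : away from z0
  have term2 : ∫⁻ ζ in D \ B, ENNReal.ofReal ‖Tb z0 lam u ζ i j / (ζ - z)‖ ≤
      ENNReal.ofReal (C2 * (8 * Real.pi * (R' + 7) / δ)) := by
    set S : Set ℂ := {ζ : ℂ | ‖ζ - z0‖ ≤ 2 * ‖ζ - z‖} with hSdef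
    have hbge : ∀ ζ ∈ D \ B, δ ≤ ‖ζ - z0‖ := by
      intro ζ hζ
      have h6 := hζ.2
      rw [hBdef, Metric.mem_ball, not_lt, Complex.dist_eq] at h6
      exact h6
    have hbne : ∀ ζ ∈ D \ B, ζ ≠ z0 := by
      intro ζ hζ h
      have h7 := hbge ζ hζ
      rw [h, sub_self, norm_zero] at h7
      linarith
    have part1 : ∫⁻ ζ in (D \ B) ∩ S, ENNReal.ofReal ‖Tb z0 lam u ζ i j / (ζ - z)‖ ≤
        ENNReal.ofReal (C2 * (32 * Real.pi / δ)) + ENNReal.ofReal (C2 * (8 * Real.pi * R' / δ)) := by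
      have hpt : ∀ ζ ∈ (D \ B) ∩ S, ENNReal.ofReal ‖Tb z0 lam u ζ i j / (ζ - z)‖ ≤
          ENNReal.ofReal (C2 * 2) * ENNReal.ofReal ((‖ζ - z0‖ ^ 3)⁻¹)
          + ENNReal.ofReal (C2 * δ⁻¹) * ENNReal.ofReal (‖ζ - z‖)⁻¹ := by
        intro ζ hζ
        rw [← ENNReal.ofReal_mul (by linarith : (0:ℝ) ≤ C2 * 2),
          ← ENNReal.ofReal_mul (mul_nonneg hC2 (inv_nonneg.2 hδ0.le)),
          ← ENNReal.ofReal_add (by positivity) (by positivity)]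
        apply ENNReal.ofReal_le_ofReal
        rw [hF ζ]
        have hbb := hbge ζ hζ.1
        have hba : ‖ζ - z0‖ ≤ 2 * ‖ζ - z‖ := hζ.2
        have ha0 : 0 < ‖ζ - z‖ := by
          rcases lt_or_ge 0 (‖ζ - z‖) with h | h
          · exact h
          · exfalso; nlinarith [norm_nonneg (ζ - z), norm_nonneg (ζ - z0)]
        have hfb := hb2 ζ hζ.1.1 (hbne ζ hζ.1)
        calc ‖Tb z0 lam u ζ i j‖ * (‖ζ - z‖)⁻¹
            ≤ (η₃ * Real.log (3*L) * (1 + ‖ζ - z0‖) /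
                (L * ‖ζ - z0‖ ^ 2) * K) * (‖ζ - z‖)⁻¹ :=
              mul_le_mul_of_nonneg_right hfb (inv_nonneg.2 (norm_nonneg _))
          _ = C2 * ((1 + ‖ζ - z0‖) / (‖ζ - z0‖)^2 *
                (‖ζ - z‖)⁻¹) := by
              rw [hC2def]
              field_simp
          _ ≤ C2 * (2*((‖ζ - z0‖)^3)⁻¹ + δ⁻¹ * (‖ζ - z‖)⁻¹) :=
              mul_le_mul_of_nonneg_left (aux_ineq1 ha0 hδ0 hbb hba) hC2
          _ = C2 * 2 * ((‖ζ - z0‖)^3)⁻¹ + C2 * δ⁻¹ * (‖ζ - z‖)⁻¹ := by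
              ring
      calc ∫⁻ ζ in (D \ B) ∩ S, ENNReal.ofReal ‖Tb z0 lam u ζ i j / (ζ - z)‖
          ≤ ∫⁻ ζ in (D \ B) ∩ S,
              (ENNReal.ofReal (C2 * 2) * ENNReal.ofReal ((‖ζ - z0‖ ^ 3)⁻¹)
              + ENNReal.ofReal (C2 * δ⁻¹) * ENNReal.ofReal (‖ζ - z‖)⁻¹) :=
            setLIntegral_mono ((measurable_const.mul hmeas_b3).add
              (measurable_const.mul hmeas_a)) hpt
        _ = ENNReal.ofReal (C2 * 2) *
              (∫⁻ ζ in (D \ B) ∩ S, ENNReal.ofReal ((‖ζ - z0‖ ^ 3)⁻¹))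
            + ENNReal.ofReal (C2 * δ⁻¹) *
              (∫⁻ ζ in (D \ B) ∩ S, ENNReal.ofReal (‖ζ - z‖)⁻¹) := by
            rw [lintegral_add_left (hmeas_b3.const_mul _),
              lintegral_const_mul _ hmeas_b3, lintegral_const_mul _ hmeas_a]
        _ ≤ ENNReal.ofReal (C2 * 2) * ENNReal.ofReal (16 * Real.pi / δ)
            + ENNReal.ofReal (C2 * δ⁻¹) * ENNReal.ofReal (8 * Real.pi * R') := by
            gcongr
            · refine le_trans (lintegral_mono_set ?_) (lint_compl_inv3 z0 δ hδ0)
              exact fun ζ hζ => hζ.1.2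
            · refine le_trans (lintegral_mono_set ?_) hintD_a
              exact fun ζ hζ => hζ.1.1
        _ ≤ ENNReal.ofReal (C2 * (32 * Real.pi / δ)) + ENNReal.ofReal (C2 * (8 * Real.pi * R' / δ)) := by
            rw [← ENNReal.ofReal_mul (by linarith : (0:ℝ) ≤ C2 * 2),
              ← ENNReal.ofReal_mul (mul_nonneg hC2 (inv_nonneg.2 hδ0.le))]
            apply add_le_add
            · apply ENNReal.ofReal_le_ofReal
              apply le_of_eq
              field_simp
              ring
            · apply ENNReal.ofReal_le_ofReal
              apply le_of_eq
              field_simp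
    have part2 : ∫⁻ ζ in (D \ B) \ S, ENNReal.ofReal ‖Tb z0 lam u ζ i j / (ζ - z)‖ ≤
        ENNReal.ofReal (C2 * (24 * Real.pi / δ)) := by
      rcases eq_or_ne z z0 with hzz | hzz
      · have hempty : (D \ B) \ S ⊆ (∅ : Set ℂ) := by
          intro ζ hζ
          exfalso
          have h1 : ζ ∉ S := hζ.2
          rw [hSdef, Set.mem_setOf_eq, not_le, ← hzz] at h1
          nlinarith [norm_nonneg (ζ - z), hδ0, hbge ζ hζ.1]
        refine le_trans (lintegral_mono_set hempty) ?_
        simp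
      · have hd0 : 0 < ‖z - z0‖ := norm_pos_iff.2 (sub_ne_zero.2 hzz)
        set d : ℝ := ‖z - z0‖ with hddef
        set cS2 : ℝ := (δ*(2*d/3))⁻¹ + (2*d/3)⁻¹ with hcS2
        have hcS2nn : (0:ℝ) ≤ cS2 := by positivity
        have hpt : ∀ ζ ∈ (D \ B) \ S, ENNReal.ofReal ‖Tb z0 lam u ζ i j / (ζ - z)‖ ≤
            ENNReal.ofReal (C2 * cS2) * ENNReal.ofReal (‖ζ - z‖)⁻¹ := by
          intro ζ hζ
          rw [← ENNReal.ofReal_mul (mul_nonneg hC2 hcS2nn)]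
          apply ENNReal.ofReal_le_ofReal
          rw [hF ζ]
          have hnotS : 2 * ‖ζ - z‖ < ‖ζ - z0‖ := by
            have h8 := hζ.2
            rw [hSdef, Set.mem_setOf_eq, not_le] at h8
            exact h8
          have hbb := hbge ζ hζ.1
          have htri : d ≤ ‖ζ - z‖ + ‖ζ - z0‖ := by
            rw [hddef]
            calc ‖z - z0‖ ≤ ‖z - ζ‖ + ‖ζ - z0‖ :=
                norm_sub_le_norm_sub_add_norm_sub z ζ z0
              _ = ‖ζ - z‖ + ‖ζ - z0‖ := by
                rw [norm_sub_rev z ζ]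
          have hdb : 2*d/3 ≤ ‖ζ - z0‖ := by nlinarith
          have hfb := hb2 ζ hζ.1.1 (hbne ζ hζ.1)
          calc ‖Tb z0 lam u ζ i j‖ * (‖ζ - z‖)⁻¹
              ≤ (η₃ * Real.log (3*L) * (1 + ‖ζ - z0‖) /
                  (L * ‖ζ - z0‖ ^ 2) * K) * (‖ζ - z‖)⁻¹ :=
                mul_le_mul_of_nonneg_right hfb (inv_nonneg.2 (norm_nonneg _))
            _ = C2 * ((1 + ‖ζ - z0‖) / (‖ζ - z0‖)^2) *
                  (‖ζ - z‖)⁻¹ := by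
                rw [hC2def]
                field_simp
            _ ≤ C2 * cS2 * (‖ζ - z‖)⁻¹ := by
                apply mul_le_mul_of_nonneg_right _ (inv_nonneg.2 (norm_nonneg _))
                exact mul_le_mul_of_nonneg_left (aux_ineq2 hδ0 hd0 hbb hdb) hC2
        have hsubball : (D \ B) \ S ⊆ Metric.ball z d := by
          intro ζ hζ
          have hnotS : 2 * ‖ζ - z‖ < ‖ζ - z0‖ := by
            have h8 := hζ.2
            rw [hSdef, Set.mem_setOf_eq, not_le] at h8
            exact h8
          have htri2 : ‖ζ - z0‖ ≤ ‖ζ - z‖ + d := by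
            rw [hddef]
            calc ‖ζ - z0‖ ≤ ‖ζ - z‖ + ‖z - z0‖ :=
              norm_sub_le_norm_sub_add_norm_sub ζ z z0
              _ = ‖ζ - z‖ + ‖z - z0‖ := rfl
          rw [Metric.mem_ball, Complex.dist_eq]
          nlinarith
        calc ∫⁻ ζ in (D \ B) \ S, ENNReal.ofReal ‖Tb z0 lam u ζ i j / (ζ - z)‖
            ≤ ∫⁻ ζ in (D \ B) \ S,
                ENNReal.ofReal (C2 * cS2) * ENNReal.ofReal (‖ζ - z‖)⁻¹ :=
              setLIntegral_mono (measurable_const.mul hmeas_a) hpt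
          _ = ENNReal.ofReal (C2 * cS2) *
                ∫⁻ ζ in (D \ B) \ S, ENNReal.ofReal (‖ζ - z‖)⁻¹ :=
              lintegral_const_mul _ hmeas_a
          _ ≤ ENNReal.ofReal (C2 * cS2) * ENNReal.ofReal (8 * Real.pi * d) := by
              gcongr
              exact le_trans (lintegral_mono_set hsubball) (lint_ball_inv z d hd0)
          _ ≤ ENNReal.ofReal (C2 * (24 * Real.pi / δ)) := by
              rw [← ENNReal.ofReal_mul (mul_nonneg hC2 hcS2nn)]
              apply ENNReal.ofReal_le_ofReal
              have hcs : cS2 * (8*Real.pi*d) ≤ 24*Real.pi/δ := by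
                rw [hcS2]
                have e1 : (δ*(2*d/3))⁻¹ * (8*Real.pi*d) = 12*Real.pi/δ := by
                  field_simp
                  ring
                have e2 : (2*d/3)⁻¹ * (8*Real.pi*d) = 12*Real.pi := by
                  field_simp
                  ring
                have e3 : (12:ℝ)*Real.pi ≤ 12*Real.pi/δ := by
                  rw [le_div_iff₀ hδ0]
                  nlinarith [Real.pi_pos]
                calc ((δ*(2*d/3))⁻¹ + (2*d/3)⁻¹) * (8*Real.pi*d)
                    = 12*Real.pi/δ + 12*Real.pi := by rw [add_mul, e1, e2]
                  _ ≤ 12*Real.pi/δ + 12*Real.pi/δ := by linarith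
                  _ = 24*Real.pi/δ := by ring
              calc C2 * cS2 * (8*Real.pi*d) = C2 * (cS2 * (8*Real.pi*d)) := by ring
                _ ≤ C2 * (24*Real.pi/δ) := mul_le_mul_of_nonneg_left hcs hC2
    have hsub : D \ B ⊆ ((D \ B) ∩ S) ∪ ((D \ B) \ S) := by
      intro ζ hζ
      by_cases h : ζ ∈ S
      · exact Or.inl ⟨hζ, h⟩
      · exact Or.inr ⟨hζ, h⟩
    refine le_trans (lintegral_mono_set hsub) ?_
    refine le_trans (lintegral_union_le _ _ _) (le_trans (add_le_add part1 part2) ?_)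
    rw [← ENNReal.ofReal_add (mul_nonneg hC2 (by positivity)) (mul_nonneg hC2 (by positivity)),
       ← ENNReal.ofReal_add (add_nonneg (mul_nonneg hC2 (by positivity)) (mul_nonneg hC2 (by positivity))) (mul_nonneg hC2 (by positivity))]
    apply ENNReal.ofReal_le_ofReal
    apply le_of_eq
    field_simp
    ring
  -- combine
  have hsplit : ∫⁻ ζ in D, ENNReal.ofReal ‖Tb z0 lam u ζ i j / (ζ - z)‖ ≤
      ENNReal.ofReal (C1 * (17 * Real.pi * δ)) + ENNReal.ofReal (C2 * (8 * Real.pi * (R' + 7) / δ)) := by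
    refine le_trans (le_trans (lintegral_mono_set ?_) (lintegral_union_le _ _ _)) (add_le_add term1 term2)
    intro ζ hζ
    by_cases hb : ζ ∈ B
    · exact Or.inl ⟨hζ, hb⟩
    · exact Or.inr ⟨hζ, hb⟩
  refine hsplit.trans ?_
  rw [← ENNReal.ofReal_add (by positivity) (by positivity)]
  apply ENNReal.ofReal_le_ofReal
  -- final real arithmetic
  set P : ℝ := L ^ (-(3/4) : ℝ) with hPdef
  have hPpos : 0 < P := Real.rpow_pos_of_pos hL0 _
  have hsqrt : Real.sqrt L = L ^ ((1:ℝ)/2) := Real.sqrt_eq_rpow L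
  have key1 : L ^ (-(1/4):ℝ) / Real.sqrt L = P := by
    rw [hsqrt, hPdef, div_eq_mul_inv, ← Real.rpow_neg hL0.le, ← Real.rpow_add hL0]
    norm_num
  have hLinv : L⁻¹ = L ^ (-(1:ℝ)) := by
    rw [Real.rpow_neg hL0.le, Real.rpow_one]
  have key2 : L⁻¹ * L ^ ((1/4):ℝ) = P := by
    rw [hLinv, hPdef, ← Real.rpow_add hL0]
    norm_num
  have hδinv : δ⁻¹ = 2 * L ^ ((1/4):ℝ) := by
    rw [hδdef, inv_div, div_eq_mul_inv, ← Real.rpow_neg hL0.le]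
    norm_num
  have hterm1 : C1 * (17 * Real.pi * δ) ≤ 9 * Real.pi * η₂ * K * P := by
    have e : C1 * (17 * Real.pi * δ) =
        (17/2) * Real.pi * η₂ * K * (L ^ (-(1/4):ℝ) / Real.sqrt L) := by
      rw [hC1def, hδdef]
      ring
    rw [e, key1]
    nlinarith [mul_nonneg (mul_nonneg (mul_nonneg Real.pi_pos.le hη₂.le) hK) hPpos.le]
  have hterm2 : C2 * (8 * Real.pi * (R'+7) / δ) =
      16 * Real.pi * (R'+7) * η₃ * Real.log (3*L) * K * P := by
    rw [hC2def, div_eq_mul_inv _ δ, hδinv,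
      show η₃ * Real.log (3*L) * K / L * (8*Real.pi*(R'+7) * (2 * L ^ ((1/4):ℝ))) =
        16 * Real.pi * (R'+7) * η₃ * Real.log (3*L) * K * (L⁻¹ * L ^ ((1/4):ℝ)) by ring, key2]
  have hPeq : P = (L ^ ((3:ℝ)/4))⁻¹ := by
    rw [hPdef, ← Real.rpow_neg hL0.le]
  have hgoal : η * (Real.log (3*L) / L ^ (3/4:ℝ)) * K = η * Real.log (3*L) * K * P := by
    rw [div_eq_mul_inv, ← hPeq]
    ring
  rw [hgoal, hterm2, hηdef]
  have hbase : (0:ℝ) ≤ 9 * Real.pi * η₂ * K * P :=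
    mul_nonneg (mul_nonneg (mul_nonneg (by positivity) hη₂.le) hK) hPpos.le
  have hlog9 : 9 * Real.pi * η₂ * K * P * 1 ≤ 9 * Real.pi * η₂ * K * P * Real.log (3*L) :=
    mul_le_mul_of_nonneg_left hlog hbase
  have hKP : (0:ℝ) ≤ Real.log (3*L) * K * P :=
    mul_nonneg (mul_nonneg (by linarith) hK) hPpos.le
  nlinarith [hterm1, hlog9, hKP]
end
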